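/- arXiv:2510.09102 — 2 statements merged into one kernel-verified Lean document; each statement's English description precedes it below -/
import Mathlib

section
/- There is an absolute constant C > 0 such that for all real x ≥ 2 and all integers r ≥ 2. k ≥ 1, one has Σ_{h ≤ x} τ_r(h)^k ≤ C · (x · r^k / (r!)^{(r^k − 1)/(r − 1)}) · (ln x + r^k − 1)^{r^k − 1}, where the sum runs over positive integers h ≤ x. -/
open Finset

/-- The `r`-fold divisor function `τ_r(h)`: the number of ordered `r`-tuples
`(d₁, …, d_r)` of positive integers with `d₁ d₂ ⋯ d_r = h`. -/
def tau (r h : ℕ) : ℕ :=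
  ((Fintype.piFinset fun _ : Fin r => Finset.Icc 1 h).filter fun d => ∏ i, d i = h).card

lemma mem_tauSet {r h : ℕ} {d : Fin r → ℕ} :
    d ∈ ((Fintype.piFinset fun _ : Fin r => Finset.Icc 1 h).filter fun d => ∏ i, d i = h)
      ↔ (∀ i, 1 ≤ d i ∧ d i ≤ h) ∧ ∏ i, d i = h := by
  simp [Fintype.mem_piFinset]

lemma tau_succ (m h : ℕ) (hh : 1 ≤ h) :
    tau (m + 1) h = ∑ p ∈ h.divisorsAntidiagonal, tau m p.2 := by
  rw [tau]
  rw [Finset.card_eq_sum_card_fiberwise (f := fun d : Fin (m+1) → ℕ => ((d 0, h / d 0) : ℕ × ℕ))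
    (t := h.divisorsAntidiagonal) ?_]
  · refine Finset.sum_congr rfl fun p hp => ?_
    obtain ⟨hpe, hne⟩ := Nat.mem_divisorsAntidiagonal.mp hp
    have hp1 : 0 < p.1 := by
      rcases Nat.eq_zero_or_pos p.1 with h0 | h0
      · exact absurd (by rw [← hpe, h0, zero_mul]) hne
      · exact h0
    have hp2 : 0 < p.2 := by
      rcases Nat.eq_zero_or_pos p.2 with h0 | h0
      · exact absurd (by rw [← hpe, h0, mul_zero]) hne
      · exact h0
    have hp1h : p.1 ≤ h := by rw [← hpe]; exact Nat.le_mul_of_pos_right _ hp2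
    have hp2h : p.2 ≤ h := by rw [← hpe]; exact Nat.le_mul_of_pos_left _ hp1
    rw [tau]
    apply Finset.card_bij' (i := fun d _ => Fin.tail d) (j := fun e _ => Fin.cons p.1 e)
    case hi =>
      rintro d hd
      rw [Finset.mem_filter, mem_tauSet] at hd
      obtain ⟨⟨hd1, hd2⟩, hd3⟩ := hd
      have hd0 : d 0 = p.1 := congrArg Prod.fst hd3
      have htail : ∏ i : Fin m, Fin.tail d i = p.2 := by
        have hprod : d 0 * ∏ i : Fin m, Fin.tail d i = h := by
          rw [← hd2, Fin.prod_univ_succ]; rfl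
        rw [hd0, ← hpe] at hprod
        exact Nat.eq_of_mul_eq_mul_left hp1 hprod
      rw [mem_tauSet]
      refine ⟨fun i => ⟨(hd1 i.succ).1, ?_⟩, htail⟩
      calc Fin.tail d i ≤ ∏ j : Fin m, Fin.tail d j :=
            Finset.single_le_prod' (fun j _ => (hd1 j.succ).1) (Finset.mem_univ i)
        _ = p.2 := htail
    case hj =>
      rintro e he
      rw [mem_tauSet] at he
      obtain ⟨he1, he2⟩ := he
      rw [Finset.mem_filter, mem_tauSet]
      have hcons : ∀ i, 1 ≤ Fin.cons (α := fun _ => ℕ) p.1 e i ∧ Fin.cons (α := fun _ => ℕ) p.1 e i ≤ h := by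
        intro i
        refine Fin.cases ?_ ?_ i
        · simpa using ⟨hp1, hp1h⟩
        · intro j
          simp only [Fin.cons_succ]
          exact ⟨(he1 j).1, le_trans (he1 j).2 hp2h⟩
      have hprod : ∏ i : Fin (m+1), Fin.cons (α := fun _ => ℕ) p.1 e i = h := by
        rw [Fin.prod_univ_succ]
        simp only [Fin.cons_zero, Fin.cons_succ]
        rw [← hpe, he2]
      refine ⟨⟨hcons, hprod⟩, ?_⟩
      have h0 : Fin.cons (α := fun _ => ℕ) p.1 e 0 = p.1 := rfl
      rw [h0]
      have : h / p.1 = p.2 := by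
        rw [← hpe, Nat.mul_div_cancel_left _ hp1]
      rw [this]
    case left_inv =>
      intro d hd
      rw [Finset.mem_filter] at hd
      have hd0 : d 0 = p.1 := congrArg Prod.fst hd.2
      rw [← hd0]
      exact Fin.cons_self_tail d
    case right_inv =>
      intro e he
      funext i; simp [Fin.tail]
  · intro d hd
    rw [Finset.mem_coe, mem_tauSet] at hd
    obtain ⟨hd1, hd2⟩ := hd
    rw [Finset.mem_coe, Nat.mem_divisorsAntidiagonal]
    refine ⟨Nat.mul_div_cancel' ?_, by omega⟩
    rw [← hd2]
    exact Finset.dvd_prod_of_mem d (Finset.mem_univ 0)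

lemma tau_one (h : ℕ) (hh : 1 ≤ h) : tau 1 h = 1 := by
  rw [tau, Finset.card_eq_one]
  refine ⟨fun _ => h, ?_⟩
  ext d
  simp only [Finset.mem_filter, Fintype.mem_piFinset, Finset.mem_Icc, Fin.prod_univ_one,
    Finset.mem_singleton]
  constructor
  · rintro ⟨h1, h2⟩; funext i; rw [Fin.eq_zero i]; exact h2
  · rintro rfl; exact ⟨fun i => ⟨hh, le_refl h⟩, rfl⟩

lemma swap_sum (N : ℕ) (f : ℕ → ℝ) :
    ∑ h ∈ Icc 1 N, ∑ p ∈ h.divisorsAntidiagonal, f p.2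
      = ∑ d ∈ Icc 1 N, ∑ q ∈ Icc 1 (N / d), f q := by
  rw [Finset.sum_sigma', Finset.sum_sigma']
  apply Finset.sum_nbij' (i := fun x : (_ : ℕ) × ℕ × ℕ => (⟨x.2.1, x.2.2⟩ : (_ : ℕ) × ℕ))
    (j := fun y : (_ : ℕ) × ℕ => (⟨y.1 * y.2, (y.1, y.2)⟩ : (_ : ℕ) × ℕ × ℕ))
  case hi =>
    rintro ⟨h, d, q⟩ hx
    simp only [Finset.mem_sigma, Finset.mem_Icc, Nat.mem_divisorsAntidiagonal] at hx ⊢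
    obtain ⟨⟨h1, h2⟩, he, hne⟩ := hx
    have hd : 0 < d := Nat.pos_of_ne_zero (by rintro rfl; rw [zero_mul] at he; omega)
    have hq : 0 < q := Nat.pos_of_ne_zero (by rintro rfl; rw [mul_zero] at he; omega)
    refine ⟨⟨hd, ?_⟩, hq, ?_⟩
    · calc d ≤ d * q := Nat.le_mul_of_pos_right _ hq
        _ ≤ N := by omega
    · rw [Nat.le_div_iff_mul_le hd]
      calc q * d = d * q := Nat.mul_comm _ _
        _ ≤ N := by omega
  case hj =>
    rintro ⟨d, q⟩ hy
    simp only [Finset.mem_sigma, Finset.mem_Icc, Nat.mem_divisorsAntidiagonal] at hy ⊢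
    obtain ⟨⟨h1, h2⟩, h3, h4⟩ := hy
    have : q * d ≤ N := (Nat.le_div_iff_mul_le (by omega)).mp h4
    refine ⟨⟨?_, ?_⟩, trivial, ?_⟩ <;> [skip; skip; positivity] <;> nlinarith
  case left_neg =>
    rintro ⟨h, d, q⟩ hx
    simp only [Finset.mem_sigma, Nat.mem_divisorsAntidiagonal] at hx
    obtain ⟨-, he, -⟩ := hx
    skip
    subst he
    rfl
  case right_neg =>
    rintro ⟨d, q⟩ _
    rfl
  case h => rintro ⟨h, d, q⟩ _; rfl

-- (a)
lemma one_div_le_log_sub (d : ℕ) (hd : 2 ≤ d) :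
    (1 : ℝ) / d ≤ Real.log d - Real.log (d - 1) := by
  have hd1 : (0 : ℝ) < (d : ℝ) - 1 := by
    have : (2 : ℝ) ≤ d := by exact_mod_cast hd
    linarith
  have hd0 : (0 : ℝ) < d := by linarith
  have h1 : Real.log (((d : ℝ) - 1) / d) ≤ ((d : ℝ) - 1) / d - 1 :=
    Real.log_le_sub_one_of_pos (by positivity)
  rw [Real.log_div (by linarith) (by linarith)] at h1
  have h2 : ((d : ℝ) - 1) / d - 1 = -(1 / d) := by field_simp; ring
  linarith [h1.trans_eq h2]

-- (b)
lemma bernoulli_aux (n : ℕ) : ∀ a : ℝ, 0 ≤ a → a ^ (n + 1) + (n + 1) * a ^ n ≤ (a + 1) ^ (n + 1) := by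
  induction n with
  | zero => intro a ha; norm_num
  | succ n ih =>
    intro a ha
    have h := ih a ha
    have h2 : (a + 1) ^ (n + 2) = (a + 1) * (a + 1) ^ (n + 1) := by ring
    have h3 : (a + 1) * (a ^ (n + 1) + (n + 1) * a ^ n) ≤ (a + 1) * (a + 1) ^ (n + 1) :=
      mul_le_mul_of_nonneg_left h (by linarith)
    have h4 : a ^ (n + 2) + (n + 2) * a ^ (n + 1) ≤ (a + 1) * (a ^ (n + 1) + (n + 1) * a ^ n) := by
      have hpow : 0 ≤ a ^ n := pow_nonneg ha n
      push_cast
      ring_nf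
      nlinarith [pow_nonneg ha n, pow_nonneg ha (n+1)]
    push_cast at h3 h4 ⊢
    linarith
-- (c)
lemma convex_pow_aux (n : ℕ) (A B : ℝ) (hB : 0 ≤ B) (hAB : B ≤ A) :
    (n + 1) * B ^ n * (A - B) ≤ A ^ (n + 1) - B ^ (n + 1) := by
  induction n with
  | zero => norm_num
  | succ n ih =>
    have hA : 0 ≤ A := hB.trans hAB
    have e1 : A ^ (n + 2) - B ^ (n + 2) = A * (A ^ (n + 1) - B ^ (n + 1)) + B ^ (n + 1) * (A - B) := by
      ring
    have hb : B ^ (n + 1) ≤ A * B ^ n := by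
      calc B ^ (n + 1) = B * B ^ n := by ring
        _ ≤ A * B ^ n := mul_le_mul_of_nonneg_right hAB (pow_nonneg hB n)
    have e2 : (n + 1 : ℝ) * B ^ (n + 1) * (A - B) ≤ A * ((n + 1) * B ^ n * (A - B)) := by
      have h0 : (0 : ℝ) ≤ (n + 1 : ℝ) * (A - B) := by
        have : (0:ℝ) ≤ A - B := by linarith
        positivity
      calc (n + 1 : ℝ) * B ^ (n + 1) * (A - B) = B ^ (n + 1) * ((n + 1 : ℝ) * (A - B)) := by ring
        _ ≤ (A * B ^ n) * ((n + 1 : ℝ) * (A - B)) := mul_le_mul_of_nonneg_right hb h0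
        _ = A * ((n + 1 : ℝ) * B ^ n * (A - B)) := by ring
    have e3 : A * ((n + 1 : ℝ) * B ^ n * (A - B)) ≤ A * (A ^ (n + 1) - B ^ (n + 1)) :=
      mul_le_mul_of_nonneg_left ih hA
    have goal_eq : ((n + 1 : ℕ) + 1 : ℝ) * B ^ (n + 1) * (A - B)
        = (n + 1 : ℝ) * B ^ (n + 1) * (A - B) + B ^ (n + 1) * (A - B) := by push_cast; ring
    rw [goal_eq, e1]
    linarith

private noncomputable def Gf (y : ℝ) (n : ℕ) (d : ℕ) : ℝ := (Real.log (y / d) + n) ^ (n + 1)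

lemma claim_sum (n : ℕ) (y : ℝ) (hy : 1 ≤ y) :
    ∑ d ∈ Icc 1 ⌊y⌋₊, (1 / (d : ℝ)) * (Real.log (y / d) + n) ^ n
      ≤ (Real.log y + n + 1) ^ (n + 1) / (n + 1) := by
  have hy0 : (0 : ℝ) < y := by linarith
  have hN1 : 1 ≤ ⌊y⌋₊ := (Nat.one_le_floor_iff y).mpr hy
  have hNy : ((⌊y⌋₊ : ℕ) : ℝ) ≤ y := Nat.floor_le (le_of_lt hy0)
  have hn1 : (0:ℝ) < (n : ℝ) + 1 := by positivity
  have hlog_nonneg : ∀ d : ℕ, 1 ≤ d → d ≤ ⌊y⌋₊ → 0 ≤ Real.log (y / d) := by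
    intro d h1 h2
    apply Real.log_nonneg
    rw [le_div_iff₀ (by exact_mod_cast Nat.lt_of_lt_of_le Nat.zero_lt_one h1), one_mul]
    calc (d : ℝ) ≤ ⌊y⌋₊ := by exact_mod_cast h2
      _ ≤ y := hNy
  have hsplit : Icc 1 ⌊y⌋₊ = insert 1 (Icc 2 ⌊y⌋₊) := by
    ext a
    simp only [Finset.mem_Icc, Finset.mem_insert]
    omega
  rw [hsplit, Finset.sum_insert (by simp)]
  have hterm1 : (1 / ((1 : ℕ) : ℝ)) * (Real.log (y / ((1:ℕ) : ℝ)) + n) ^ n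
      = (Real.log y + n) ^ n := by norm_num
  rw [hterm1]
  have htail : ∑ d ∈ Icc 2 ⌊y⌋₊, (1 / (d : ℝ)) * (Real.log (y / d) + n) ^ n
      ≤ (Gf y n 1 - Gf y n ⌊y⌋₊) / (n + 1) := by
    have hstep : ∀ d ∈ Icc 2 ⌊y⌋₊, (1 / (d : ℝ)) * (Real.log (y / d) + n) ^ n
        ≤ (Gf y n (d - 1) - Gf y n d) / (n + 1) := by
      intro d hd
      rw [Finset.mem_Icc] at hd
      obtain ⟨hd2, hdN⟩ := hd
      have hd0 : (0 : ℝ) < d := by positivity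
      have hd10 : (0 : ℝ) < ((d - 1 : ℕ) : ℝ) := by
        have : (1:ℕ) ≤ d - 1 := by omega
        exact_mod_cast Nat.lt_of_lt_of_le Nat.zero_lt_one this
      have hBnn : 0 ≤ Real.log (y / d) + n := by
        have := hlog_nonneg d (by omega) hdN
        have hn : (0:ℝ) ≤ n := Nat.cast_nonneg n
        linarith
      have hcast : ((d - 1 : ℕ) : ℝ) = (d : ℝ) - 1 := by
        push_cast [Nat.cast_sub (by omega : 1 ≤ d)]; ring
      have hABdiff : (Real.log (y / (d - 1 : ℕ)) + n) - (Real.log (y / d) + n)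
          = Real.log d - Real.log ((d - 1 : ℕ) : ℝ) := by
        rw [Real.log_div (by positivity) (by positivity),
          Real.log_div (by positivity) (by positivity)]
        ring
      have h1 := one_div_le_log_sub d hd2
      rw [← hcast] at h1
      have hgap : 1 / (d : ℝ) ≤ (Real.log (y / (d - 1 : ℕ)) + n) - (Real.log (y / d) + n) := by
        linarith
      have hAB : Real.log (y / d) + n ≤ Real.log (y / (d - 1 : ℕ)) + n := by
        have : (0:ℝ) < 1 / d := by positivity
        linarith
      have hconv := convex_pow_aux n (Real.log (y / (d - 1 : ℕ)) + n) (Real.log (y / d) + n) hBnn hAB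
      have h3 : ((n : ℝ) + 1) * (Real.log (y / d) + n) ^ n * (1 / d)
          ≤ ((n : ℝ) + 1) * (Real.log (y / d) + n) ^ n * ((Real.log (y / (d - 1 : ℕ)) + n) - (Real.log (y / d) + n)) := by
        apply mul_le_mul_of_nonneg_left hgap
        positivity
      rw [Gf, Gf, le_div_iff₀ hn1]
      calc 1 / (d : ℝ) * (Real.log (y / d) + n) ^ n * ((n : ℝ) + 1)
          = ((n : ℝ) + 1) * (Real.log (y / d) + n) ^ n * (1 / d) := by ring
        _ ≤ ((n : ℝ) + 1) * (Real.log (y / d) + n) ^ n * ((Real.log (y / (d - 1 : ℕ)) + n) - (Real.log (y / d) + n)) := h3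
        _ ≤ (Real.log (y / (d - 1 : ℕ)) + n) ^ (n + 1) - (Real.log (y / d) + n) ^ (n + 1) := hconv
    calc ∑ d ∈ Icc 2 ⌊y⌋₊, (1 / (d : ℝ)) * (Real.log (y / d) + n) ^ n
        ≤ ∑ d ∈ Icc 2 ⌊y⌋₊, (Gf y n (d - 1) - Gf y n d) / (n + 1) := Finset.sum_le_sum hstep
      _ = (∑ d ∈ Icc 2 ⌊y⌋₊, (Gf y n (d - 1) - Gf y n d)) / (n + 1) := by rw [Finset.sum_div]
      _ = (Gf y n 1 - Gf y n ⌊y⌋₊) / (n + 1) := by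
          congr 1
          rw [show Icc 2 ⌊y⌋₊ = Ico 2 (⌊y⌋₊ + 1) from by rw [Finset.Ico_add_one_right_eq_Icc],
            Finset.sum_Ico_eq_sum_range]
          have hre : ∀ i ∈ Finset.range (⌊y⌋₊ + 1 - 2), (Gf y n (2 + i - 1) - Gf y n (2 + i)) =
              ((fun j => Gf y n (j + 1)) i - (fun j => Gf y n (j + 1)) (i + 1)) := by
            intro i _
            congr 2 <;> omega
          rw [Finset.sum_congr rfl hre, Finset.sum_range_sub' (fun j => Gf y n (j + 1))]
          congr 2
          omega
  have hGN : 0 ≤ Gf y n ⌊y⌋₊ := by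
    have := hlog_nonneg ⌊y⌋₊ hN1 le_rfl
    have hn : (0:ℝ) ≤ n := Nat.cast_nonneg n
    rw [Gf]
    positivity
  have hL : 0 ≤ Real.log y := Real.log_nonneg hy
  have hb := bernoulli_aux n (Real.log y + n) (by positivity)
  have hG1 : Gf y n 1 = (Real.log y + n) ^ (n + 1) := by
    rw [Gf]; norm_num
  have final : (Real.log y + n) ^ n + (Real.log y + n) ^ (n + 1) / (n + 1)
      ≤ (Real.log y + n + 1) ^ (n + 1) / (n + 1) := by
    rw [le_div_iff₀ hn1]
    have hexp : ((Real.log y + n) ^ n + (Real.log y + n) ^ (n + 1) / (n + 1)) * ((n:ℝ) + 1)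
        = ((n:ℝ) + 1) * (Real.log y + n) ^ n + ((Real.log y + n) ^ (n + 1) / ((n:ℝ) + 1)) * ((n:ℝ)+1) := by
      ring
    rw [hexp, div_mul_cancel₀ _ (ne_of_gt hn1)]
    linarith
  have htail2 : (Gf y n 1 - Gf y n ⌊y⌋₊) / (n + 1) ≤ (Real.log y + n) ^ (n + 1) / (n + 1) := by
    gcongr
    all_goals linarith [hG1.le]
  linarith

lemma sum_tau_le (n : ℕ) : ∀ y : ℝ, 1 ≤ y →
    ∑ h ∈ Icc 1 ⌊y⌋₊, (tau (n + 1) h : ℝ)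
      ≤ y * (Real.log y + n) ^ n / n.factorial := by
  induction n with
  | zero =>
    intro y hy
    have : ∀ h ∈ Icc 1 ⌊y⌋₊, (tau 1 h : ℝ) = 1 := by
      intro h hh
      rw [Finset.mem_Icc] at hh
      rw [tau_one h hh.1]
      norm_num
    rw [Finset.sum_congr rfl this, Finset.sum_const, Nat.card_Icc]
    simp only [Nat.cast_pow, pow_zero, Nat.factorial_zero, Nat.cast_zero, Nat.cast_one,
      nsmul_eq_mul, mul_one]
    have := Nat.floor_le (by linarith : (0:ℝ) ≤ y)
    push_cast
    simpa using by linarith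
  | succ n ih =>
    intro y hy
    have hy0 : (0 : ℝ) < y := by linarith
    have hconv : ∀ h ∈ Icc 1 ⌊y⌋₊, (tau (n + 2) h : ℝ)
        = ∑ p ∈ h.divisorsAntidiagonal, (tau (n + 1) p.2 : ℝ) := by
      intro h hh
      rw [Finset.mem_Icc] at hh
      rw [tau_succ (n + 1) h hh.1]
      push_cast
      rfl
    rw [Finset.sum_congr rfl hconv, swap_sum ⌊y⌋₊ (fun q => (tau (n + 1) q : ℝ))]
    have hIH : ∀ d ∈ Icc 1 ⌊y⌋₊, ∑ q ∈ Icc 1 (⌊y⌋₊ / d), (tau (n + 1) q : ℝ)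
        ≤ (y / d) * (Real.log (y / d) + n) ^ n / n.factorial := by
      intro d hd
      rw [Finset.mem_Icc] at hd
      have hd0 : (0 : ℝ) < d := by exact_mod_cast Nat.lt_of_lt_of_le Nat.zero_lt_one hd.1
      have hdy : (d : ℝ) ≤ y := le_trans (by exact_mod_cast hd.2 : (d:ℝ) ≤ ⌊y⌋₊) (Nat.floor_le hy0.le)
      have hyd : 1 ≤ y / d := by rw [le_div_iff₀ hd0, one_mul]; exact hdy
      have hfloor : ⌊y⌋₊ / d = ⌊y / d⌋₊ := (Nat.floor_div_natCast y d).symm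
      rw [hfloor]
      exact ih (y / d) hyd
    calc ∑ d ∈ Icc 1 ⌊y⌋₊, ∑ q ∈ Icc 1 (⌊y⌋₊ / d), (tau (n + 1) q : ℝ)
        ≤ ∑ d ∈ Icc 1 ⌊y⌋₊, (y / d) * (Real.log (y / d) + n) ^ n / n.factorial :=
          Finset.sum_le_sum hIH
      _ = (y / n.factorial) * ∑ d ∈ Icc 1 ⌊y⌋₊, (1 / (d : ℝ)) * (Real.log (y / d) + n) ^ n := by
          rw [Finset.mul_sum]
          refine Finset.sum_congr rfl fun d _ => ?_
          field_simp
      _ ≤ (y / n.factorial) * ((Real.log y + n + 1) ^ (n + 1) / (n + 1)) := by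
          apply mul_le_mul_of_nonneg_left (claim_sum n y hy)
          positivity
      _ = y * (Real.log y + (n + 1 : ℕ)) ^ (n + 1) / (n + 1).factorial := by
          rw [Nat.factorial_succ]
          push_cast
          field_simp
          ring

lemma gcd_supermodular {p p' q q' : ℕ} (hp : p ≠ 0) (hq : q ≠ 0) (hp' : p ∣ p') (hq' : q ∣ q')
    (hp'0 : p' ≠ 0) (hq'0 : q' ≠ 0) :
    Nat.gcd p q' * Nat.gcd p' q ∣ Nat.gcd p' q' * Nat.gcd p q := by
  have g1 : Nat.gcd p q' ≠ 0 := Nat.gcd_ne_zero_left hp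
  have g2 : Nat.gcd p' q ≠ 0 := Nat.gcd_ne_zero_left hp'0
  have g3 : Nat.gcd p' q' ≠ 0 := Nat.gcd_ne_zero_left hp'0
  have g4 : Nat.gcd p q ≠ 0 := Nat.gcd_ne_zero_left hp
  rw [← Nat.factorization_le_iff_dvd (mul_ne_zero g1 g2) (mul_ne_zero g3 g4)]
  rw [Nat.factorization_mul g1 g2, Nat.factorization_mul g3 g4,
    Nat.factorization_gcd hp hq'0, Nat.factorization_gcd hp'0 hq,
    Nat.factorization_gcd hp'0 hq'0, Nat.factorization_gcd hp hq]
  rw [Finsupp.le_def]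
  intro x
  simp only [Finsupp.add_apply, Finsupp.inf_apply]
  have h1 : p.factorization x ≤ p'.factorization x :=
    (Nat.factorization_le_iff_dvd hp hp'0).mpr hp' x
  have h2 : q.factorization x ≤ q'.factorization x :=
    (Nat.factorization_le_iff_dvd hq hq'0).mpr hq' x
  omega

/-- Northwest-corner-style matrix entry. -/
def Mm (P Q : ℕ → ℕ) (i j : ℕ) : ℕ :=
  (Nat.gcd (P (i+1)) (Q (j+1)) * Nat.gcd (P i) (Q j))
    / (Nat.gcd (P i) (Q (j+1)) * Nat.gcd (P (i+1)) (Q j))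

lemma Mm_symm (P Q : ℕ → ℕ) (i j : ℕ) : Mm P Q i j = Mm Q P j i := by
  rw [Mm, Mm, Nat.gcd_comm (Q (j+1)), Nat.gcd_comm (Q j), Nat.gcd_comm (Q (j+1)) (P i),
    Nat.gcd_comm (Q j) (P (i+1)), mul_comm (Nat.gcd (P i) (Q (j+1)))]

section
variable {P Q : ℕ → ℕ} (hP0 : ∀ i, P i ≠ 0) (hQ0 : ∀ j, Q j ≠ 0)
  (hPd : ∀ i, P i ∣ P (i+1)) (hQd : ∀ j, Q j ∣ Q (j+1))

include hP0 hQ0 hPd hQd in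
lemma Mm_mul_eq (i j : ℕ) :
    Mm P Q i j * (Nat.gcd (P i) (Q (j+1)) * Nat.gcd (P (i+1)) (Q j))
      = Nat.gcd (P (i+1)) (Q (j+1)) * Nat.gcd (P i) (Q j) :=
  Nat.div_mul_cancel (gcd_supermodular (hP0 i) (hQ0 j) (hPd i) (hQd j) (hP0 (i+1)) (hQ0 (j+1)))

include hP0 hQ0 hPd hQd in
lemma Mm_pos (i j : ℕ) : 0 < Mm P Q i j := by
  have h := Mm_mul_eq hP0 hQ0 hPd hQd i j
  rcases Nat.eq_zero_or_pos (Mm P Q i j) with h0 | h0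
  · rw [h0, zero_mul] at h
    have : Nat.gcd (P (i+1)) (Q (j+1)) * Nat.gcd (P i) (Q j) ≠ 0 :=
      mul_ne_zero (Nat.gcd_ne_zero_left (hP0 _)) (Nat.gcd_ne_zero_left (hP0 _))
    exact absurd h.symm this
  · exact h0

include hP0 hQ0 hPd hQd in
lemma Mm_row_telescope (hQinit : Q 0 = 1) (i : ℕ) : ∀ J : ℕ,
    (∏ j ∈ Finset.range J, Mm P Q i j) * Nat.gcd (P i) (Q J) = Nat.gcd (P (i+1)) (Q J) := by
  intro J
  induction J with
  | zero => simp [hQinit]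
  | succ J ihJ =>
    have hgpos : Nat.gcd (P (i+1)) (Q J) ≠ 0 := Nat.gcd_ne_zero_left (hP0 _)
    apply Nat.eq_of_mul_eq_mul_right (Nat.pos_of_ne_zero hgpos)
    calc (∏ j ∈ Finset.range (J+1), Mm P Q i j) * Nat.gcd (P i) (Q (J+1)) * Nat.gcd (P (i+1)) (Q J)
        = (∏ j ∈ Finset.range J, Mm P Q i j) *
            (Mm P Q i J * (Nat.gcd (P i) (Q (J+1)) * Nat.gcd (P (i+1)) (Q J))) := by
          rw [Finset.prod_range_succ]; ring
      _ = (∏ j ∈ Finset.range J, Mm P Q i j) *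
            (Nat.gcd (P (i+1)) (Q (J+1)) * Nat.gcd (P i) (Q J)) := by
          rw [Mm_mul_eq hP0 hQ0 hPd hQd]
      _ = ((∏ j ∈ Finset.range J, Mm P Q i j) * Nat.gcd (P i) (Q J)) *
            Nat.gcd (P (i+1)) (Q (J+1)) := by ring
      _ = Nat.gcd (P (i+1)) (Q J) * Nat.gcd (P (i+1)) (Q (J+1)) := by rw [ihJ]
      _ = Nat.gcd (P (i+1)) (Q (J+1)) * Nat.gcd (P (i+1)) (Q J) := by ring
end

/-- prefix products of a tuple -/
def pref (a : ℕ) (d : Fin a → ℕ) (i : ℕ) : ℕ :=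
  ∏ i' ∈ Finset.range i, (if h : i' < a then d ⟨i', h⟩ else 1)

section
variable {a : ℕ} {d : Fin a → ℕ} (hd : ∀ i, 1 ≤ d i)

include hd in
lemma pref_ne_zero (i : ℕ) : pref a d i ≠ 0 := by
  rw [pref]
  apply Finset.prod_ne_zero_iff.mpr
  intro i' _
  split
  · next hlt => have := hd ⟨i', hlt⟩; omega
  · exact one_ne_zero

lemma pref_dvd_succ (i : ℕ) : pref a d i ∣ pref a d (i+1) := by
  rw [pref, pref, Finset.prod_range_succ]
  exact dvd_mul_right _ _

lemma pref_succ_eq {i : ℕ} (h : i < a) : pref a d (i+1) = pref a d i * d ⟨i, h⟩ := by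
  rw [pref, pref, Finset.prod_range_succ, dif_pos h]

lemma pref_zero : pref a d 0 = 1 := by rw [pref, Finset.prod_range_zero]

lemma pref_top : pref a d a = ∏ i, d i := by
  rw [pref, ← Fin.prod_univ_eq_prod_range (fun i' => if h : i' < a then d ⟨i', h⟩ else 1) a]
  exact Finset.prod_congr rfl fun i _ => by rw [dif_pos i.isLt]

lemma pref_dvd_top {i : ℕ} (h : i ≤ a) : pref a d i ∣ pref a d a := by
  rw [pref, pref]
  exact Finset.prod_dvd_prod_of_subset _ _ _ (by
    intro x hx
    rw [Finset.mem_range] at hx ⊢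
    omega)
end

lemma row_prod {a b h : ℕ} {d : Fin a → ℕ} {e : Fin b → ℕ}
    (hd : ∀ i, 1 ≤ d i) (he : ∀ j, 1 ≤ e j)
    (hdp : ∏ i, d i = h) (hep : ∏ j, e j = h) {i : ℕ} (hi : i < a) :
    ∏ j ∈ Finset.range b, Mm (pref a d) (pref b e) i j = d ⟨i, hi⟩ := by
  have hP0 := pref_ne_zero hd
  have hQ0 := pref_ne_zero he
  have h1 := Mm_row_telescope hP0 hQ0 (fun i => pref_dvd_succ i) (fun j => pref_dvd_succ j)
    pref_zero i b
  have hQb : pref b e b = h := by rw [pref_top, hep]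
  have hPi : pref a d i ∣ h := by
    rw [← hdp, ← pref_top]; exact pref_dvd_top (le_of_lt hi)
  have hPi1 : pref a d (i+1) ∣ h := by
    rw [← hdp, ← pref_top]; exact pref_dvd_top hi
  rw [hQb, Nat.gcd_eq_left hPi, Nat.gcd_eq_left hPi1, pref_succ_eq hi] at h1
  have hpos : 0 < pref a d i := Nat.pos_of_ne_zero (hP0 i)
  apply Nat.eq_of_mul_eq_mul_left hpos
  rw [← h1]; ring

lemma col_prod {a b h : ℕ} {d : Fin a → ℕ} {e : Fin b → ℕ}
    (hd : ∀ i, 1 ≤ d i) (he : ∀ j, 1 ≤ e j)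
    (hdp : ∏ i, d i = h) (hep : ∏ j, e j = h) {j : ℕ} (hj : j < b) :
    ∏ i ∈ Finset.range a, Mm (pref a d) (pref b e) i j = e ⟨j, hj⟩ := by
  calc ∏ i ∈ Finset.range a, Mm (pref a d) (pref b e) i j
      = ∏ i ∈ Finset.range a, Mm (pref b e) (pref a d) j i :=
        Finset.prod_congr rfl fun i _ => Mm_symm _ _ _ _
    _ = e ⟨j, hj⟩ := row_prod he hd hep hdp hj

lemma mul_tau_le (a b h : ℕ) (hh : 1 ≤ h) : tau a h * tau b h ≤ tau (a * b) h := by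
  rw [tau, tau, tau, ← Finset.card_product]
  apply Finset.card_le_card_of_injOn
    (fun de => fun x : Fin (a * b) =>
      Mm (pref a de.1) (pref b de.2) ((finProdFinEquiv.symm x).1 : ℕ) ((finProdFinEquiv.symm x).2 : ℕ))
  · rintro ⟨d, e⟩ hde
    rw [Finset.mem_coe, Finset.mem_product, mem_tauSet, mem_tauSet] at hde
    obtain ⟨⟨hd, hdp⟩, he, hep⟩ := hde
    have hd1 : ∀ i, 1 ≤ d i := fun i => (hd i).1
    have he1 : ∀ j, 1 ≤ e j := fun j => (he j).1
    have hP0 := pref_ne_zero hd1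
    have hQ0 := pref_ne_zero he1
    have hMpos : ∀ i j : ℕ, 0 < Mm (pref a d) (pref b e) i j :=
      Mm_pos hP0 hQ0 (fun i => pref_dvd_succ i) (fun j => pref_dvd_succ j)
    have hprod : ∏ x : Fin (a * b),
        Mm (pref a d) (pref b e) ((finProdFinEquiv.symm x).1 : ℕ) ((finProdFinEquiv.symm x).2 : ℕ)
        = h := by
      rw [← Equiv.prod_comp finProdFinEquiv
        (fun x => Mm (pref a d) (pref b e) ((finProdFinEquiv.symm x).1 : ℕ) ((finProdFinEquiv.symm x).2 : ℕ))]
      simp only [Equiv.symm_apply_apply]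
      rw [Fintype.prod_prod_type]
      calc ∏ i : Fin a, ∏ j : Fin b, Mm (pref a d) (pref b e) (i : ℕ) (j : ℕ)
          = ∏ i : Fin a, d i := by
            refine Finset.prod_congr rfl fun i _ => ?_
            rw [Fin.prod_univ_eq_prod_range (fun j => Mm (pref a d) (pref b e) (i : ℕ) j) b]
            have := row_prod hd1 he1 hdp hep i.isLt
            rw [this]
        _ = h := hdp
    rw [Finset.mem_coe, mem_tauSet]
    refine ⟨fun x => ⟨hMpos _ _, ?_⟩, hprod⟩
    · rw [← hprod]
      exact Finset.single_le_prod'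
        (f := fun y : Fin (a*b) => Mm (pref a d) (pref b e)
          ((finProdFinEquiv.symm y).1 : ℕ) ((finProdFinEquiv.symm y).2 : ℕ))
        (fun y _ => Nat.one_le_iff_ne_zero.mpr (Nat.pos_iff_ne_zero.mp (hMpos _ _)))
        (Finset.mem_univ x)
  · rintro ⟨d, e⟩ hde ⟨d', e'⟩ hde' heq
    simp only [Finset.mem_coe, Finset.mem_product, mem_tauSet] at hde hde'
    obtain ⟨⟨hd, hdp⟩, he, hep⟩ := hde
    obtain ⟨⟨hd', hdp'⟩, he', hep'⟩ := hde'
    have hM : ∀ (i : Fin a) (j : Fin b),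
        Mm (pref a d) (pref b e) (i : ℕ) (j : ℕ) = Mm (pref a d') (pref b e') (i : ℕ) (j : ℕ) := by
      intro i j
      have := congrFun heq (finProdFinEquiv (i, j))
      simpa [Equiv.symm_apply_apply] using this
    have hdd : d = d' := by
      funext i
      have h1 := row_prod (fun i => (hd i).1) (fun j => (he j).1) hdp hep i.isLt
      have h2 := row_prod (fun i => (hd' i).1) (fun j => (he' j).1) hdp' hep' i.isLt
      rw [← h1, ← h2]
      exact Finset.prod_congr rfl fun j hj => by
        rw [Finset.mem_range] at hj
        have := hM i ⟨j, hj⟩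
        simpa using this
    have hee : e = e' := by
      funext j
      have h1 := col_prod (fun i => (hd i).1) (fun j => (he j).1) hdp hep j.isLt
      have h2 := col_prod (fun i => (hd' i).1) (fun j => (he' j).1) hdp' hep' j.isLt
      rw [← h1, ← h2]
      exact Finset.prod_congr rfl fun i hi => by
        rw [Finset.mem_range] at hi
        have := hM ⟨i, hi⟩ j
        simpa using this
    rw [hdd, hee]

lemma fact_mul_le (a b : ℕ) (ha : 1 ≤ a) : a.factorial ^ b * b.factorial ≤ (a * b).factorial := by
  induction b with
  | zero => simp
  | succ b ih =>
    have key : (b + 1) * ((a * b).factorial * a.factorial) ≤ (a * b + a).factorial := by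
      have hchoose : (a * b + a).choose a * a.factorial * (a * b).factorial
          = (a * b + a).factorial := by
        have := Nat.choose_mul_factorial_mul_factorial (Nat.le_add_left a (a * b))
        simpa [Nat.add_sub_cancel] using this
      have hge : b + 1 ≤ (a * b + a).choose a := by
        obtain ⟨t, rfl⟩ : ∃ t, a = t + 1 := ⟨a - 1, by omega⟩
        have hs := Nat.add_one_mul_choose_eq ((t + 1) * b + t) t
        have hpos : 0 < ((t + 1) * b + t).choose t := Nat.choose_pos (by omega)
        have heq : ((t + 1) * b + (t + 1)) * ((t + 1) * b + t).choose t
            = ((t + 1) * b + (t + 1)).choose (t + 1) * (t + 1) := by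
          have h3 : (t + 1) * b + t + 1 = (t + 1) * b + (t + 1) := by omega
          simpa [Nat.succ_eq_add_one, h3] using hs
        have h7 : (b + 1) * (t + 1) ≤ ((t + 1) * b + (t + 1)).choose (t + 1) * (t + 1) := by
          calc (b + 1) * (t + 1) = ((t + 1) * b + (t + 1)) * 1 := by ring
            _ ≤ ((t + 1) * b + (t + 1)) * ((t + 1) * b + t).choose t :=
                Nat.mul_le_mul_left _ hpos
            _ = ((t + 1) * b + (t + 1)).choose (t + 1) * (t + 1) := heq
        exact Nat.le_of_mul_le_mul_right h7 (by omega)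
      calc (b + 1) * ((a * b).factorial * a.factorial)
          ≤ (a * b + a).choose a * ((a * b).factorial * a.factorial) :=
            Nat.mul_le_mul_right _ hge
        _ = (a * b + a).choose a * a.factorial * (a * b).factorial := by ring
        _ = (a * b + a).factorial := hchoose
    calc a.factorial ^ (b + 1) * (b + 1).factorial
        = (a.factorial ^ b * b.factorial) * (a.factorial * (b + 1)) := by
          rw [Nat.factorial_succ]; ring
      _ ≤ (a * b).factorial * (a.factorial * (b + 1)) := Nat.mul_le_mul_right _ ih
      _ = (b + 1) * ((a * b).factorial * a.factorial) := by ring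
      _ ≤ (a * b + a).factorial := key
      _ = (a * (b + 1)).factorial := by rw [Nat.mul_succ]

lemma fact_geom (r k : ℕ) (hr : 1 ≤ r) :
    r.factorial ^ (∑ i ∈ Finset.range k, r ^ i) ≤ (r ^ k).factorial := by
  induction k with
  | zero => simp
  | succ k ih =>
    have hsum : ∑ i ∈ Finset.range (k + 1), r ^ i = r * (∑ i ∈ Finset.range k, r ^ i) + 1 := by
      rw [Finset.sum_range_succ', Finset.mul_sum]
      simp only [pow_zero]
      congr 1
      exact Finset.sum_congr rfl fun i _ => by ring
    rw [hsum]
    calc r.factorial ^ (r * (∑ i ∈ Finset.range k, r ^ i) + 1)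
        = (r.factorial ^ (∑ i ∈ Finset.range k, r ^ i)) ^ r * r.factorial := by
          rw [pow_succ, mul_comm r, pow_mul]
      _ ≤ ((r ^ k).factorial) ^ r * r.factorial := by
          exact Nat.mul_le_mul_right _ (Nat.pow_le_pow_left ih r)
      _ ≤ (r ^ k * r).factorial := fact_mul_le (r ^ k) r (Nat.one_le_pow _ _ (by omega))
      _ = (r ^ (k + 1)).factorial := by rw [pow_succ]

lemma pow_tau_le (r k h : ℕ) (hh : 1 ≤ h) : tau r h ^ k ≤ tau (r ^ k) h := by
  induction k with
  | zero => simp [pow_zero, tau_one h hh]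
  | succ k ih =>
    calc tau r h ^ (k + 1) = tau r h ^ k * tau r h := by rw [pow_succ]
      _ ≤ tau (r ^ k) h * tau r h := Nat.mul_le_mul_right _ ih
      _ ≤ tau (r ^ k * r) h := mul_tau_le _ _ _ hh
      _ = tau (r ^ (k + 1)) h := by rw [pow_succ]

/-- **Lemma 3, Mardzhanishvili.** There is an absolute constant `C > 0` such
that for all real `x ≥ 2` and all integers `r ≥ 2`, `k ≥ 1`,
`∑_{h ≤ x} τ_r(h)^k ≤ C · (x r^k / (r!)^{(r^k−1)/(r−1)}) · (ln x + r^k − 1)^{r^k − 1}`. -/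
theorem sum_tau_pow_le : ∃ C : ℝ, 0 < C ∧ ∀ x : ℝ, 2 ≤ x → ∀ r k : ℕ, 2 ≤ r → 1 ≤ k →
    ∑ h ∈ Finset.Icc 1 ⌊x⌋₊, (tau r h : ℝ) ^ k
      ≤ C * (x * (r : ℝ) ^ k /
            ((r.factorial : ℝ) ^ (((r : ℝ) ^ k - 1) / ((r : ℝ) - 1)))) *
          (Real.log x + (r : ℝ) ^ k - 1) ^ (r ^ k - 1) := by
  refine ⟨1, one_pos, ?_⟩
  intro x hx r k hr hk
  have hx1 : (1 : ℝ) ≤ x := by linarith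
  have hm2 : 2 ≤ r ^ k := by
    calc 2 = 2 ^ 1 := rfl
      _ ≤ r ^ k := Nat.pow_le_pow_left hr k |>.trans' (Nat.pow_le_pow_right (by omega) hk)
  set n : ℕ := r ^ k - 1 with hn
  have hmn : r ^ k = n + 1 := by omega
  -- rewrite rpow as a natural power
  have hgeom : ((r : ℝ) ^ k - 1) / ((r : ℝ) - 1) = ((∑ i ∈ Finset.range k, r ^ i : ℕ) : ℝ) := by
    have hr1 : (r : ℝ) ≠ 1 := by
      have : (2 : ℝ) ≤ r := by exact_mod_cast hr
      linarith
    rw [← geom_sum_eq hr1 k]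
    push_cast
    rfl
  have hrpow : (r.factorial : ℝ) ^ (((r : ℝ) ^ k - 1) / ((r : ℝ) - 1))
      = ((r.factorial ^ (∑ i ∈ Finset.range k, r ^ i) : ℕ) : ℝ) := by
    rw [hgeom, Real.rpow_natCast]
    push_cast
    ring
  -- pointwise bound then sum bound
  have hstep1 : ∑ h ∈ Finset.Icc 1 ⌊x⌋₊, (tau r h : ℝ) ^ k
      ≤ ∑ h ∈ Finset.Icc 1 ⌊x⌋₊, (tau (n + 1) h : ℝ) := by
    apply Finset.sum_le_sum
    intro h hh
    rw [Finset.mem_Icc] at hh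
    rw [← hmn]
    exact_mod_cast pow_tau_le r k h hh.1
  have hstep2 := sum_tau_le n x hx1
  -- the factorial comparison
  have hfact : (r.factorial ^ (∑ i ∈ Finset.range k, r ^ i) : ℕ) ≤ (n + 1) * n.factorial := by
    calc (r.factorial ^ (∑ i ∈ Finset.range k, r ^ i) : ℕ) ≤ (r ^ k).factorial :=
          fact_geom r k (by omega)
      _ = (n + 1) * n.factorial := by rw [hmn, Nat.factorial_succ]
  have hlog : 0 ≤ Real.log x + n := by
    have := Real.log_nonneg hx1
    positivity
  have hbase : Real.log x + (r : ℝ) ^ k - 1 = Real.log x + n := by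
    have : ((r : ℝ)) ^ k = ((r ^ k : ℕ) : ℝ) := by push_cast; ring
    rw [this, hmn]
    push_cast
    ring
  rw [hbase, hrpow, one_mul]
  have hpowpos : (0 : ℝ) < ((r.factorial ^ (∑ i ∈ Finset.range k, r ^ i) : ℕ) : ℝ) := by
    have : 0 < r.factorial ^ (∑ i ∈ Finset.range k, r ^ i) := pow_pos r.factorial_pos _
    exact_mod_cast this
  have hfactpos : (0 : ℝ) < (n.factorial : ℝ) := by exact_mod_cast n.factorial_pos
  have hx0 : (0 : ℝ) < x := by linarith
  have hB : (0 : ℝ) ≤ (Real.log x + n) ^ n := by positivity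
  have hkey : x * (Real.log x + n) ^ n / n.factorial
      ≤ x * (r : ℝ) ^ k / ((r.factorial ^ (∑ i ∈ Finset.range k, r ^ i) : ℕ) : ℝ)
        * (Real.log x + n) ^ n := by
    have hrk : ((r : ℝ)) ^ k = ((n : ℝ) + 1) := by
      have : ((r : ℝ)) ^ k = ((r ^ k : ℕ) : ℝ) := by push_cast; ring
      rw [this, hmn]; push_cast; ring
    rw [hrk, div_mul_eq_mul_div, div_le_div_iff₀ hfactpos hpowpos]
    have hf : ((r.factorial ^ (∑ i ∈ Finset.range k, r ^ i) : ℕ) : ℝ) ≤ ((n : ℝ) + 1) * n.factorial := by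
      exact_mod_cast hfact
    calc x * (Real.log x + n) ^ n * ((r.factorial ^ (∑ i ∈ Finset.range k, r ^ i) : ℕ) : ℝ)
        ≤ x * (Real.log x + n) ^ n * (((n : ℝ) + 1) * n.factorial) := by
          apply mul_le_mul_of_nonneg_left hf
          positivity
      _ = x * ((n : ℝ) + 1) * (Real.log x + n) ^ n * n.factorial := by ring
  calc ∑ h ∈ Finset.Icc 1 ⌊x⌋₊, (tau r h : ℝ) ^ k
      ≤ ∑ h ∈ Finset.Icc 1 ⌊x⌋₊, (tau (n + 1) h : ℝ) := hstep1
    _ ≤ x * (Real.log x + n) ^ n / n.factorial := hstep2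
    _ ≤ _ := hkey
end

section
/- Let α be a real number such that |α − a/q| ≤ 1/q² for some integers a, q with gcd(a, q) = 1 and q ≥ 2, let x ≥ 1 be real, y > 0 real, and β an arbitrary real number. Then Σ_{h ≤ x} min( y, 1/‖α h + β‖ ) ≤ 6 (x/q + 1)(y + q ln q), where the sum runs over positive integers h ≤ x. -/
open Finset

/-- `‖t‖`, the distance from the real number `t` to the nearest integer. -/
noncomputable def distNearestInt (t : ℝ) : ℝ := |t - (round t : ℤ)|

private lemma dni_nonneg (t : ℝ) : 0 ≤ distNearestInt t := abs_nonneg _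

private lemma dni_le (t : ℝ) (m : ℤ) : distNearestInt t ≤ |t - m| := by
  have h1 : distNearestInt t = min (Int.fract t) (1 - Int.fract t) := abs_sub_round_eq_min t
  have hf0 := Int.fract_nonneg t
  have hf1 := (Int.fract_lt_one t).le
  have hfl : (⌊t⌋ : ℝ) = t - Int.fract t := by
    rw [Int.fract]; ring
  rcases le_or_gt m ⌊t⌋ with h | h
  · have hm : (m : ℝ) ≤ t - Int.fract t := by rw [← hfl]; exact_mod_cast h
    have : Int.fract t ≤ |t - m| := by
      rw [abs_of_nonneg (by linarith)]; linarith
    rw [h1]; exact le_trans (min_le_left _ _) this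
  · have h' : (⌊t⌋ : ℤ) + 1 ≤ m := h
    have hm : t - Int.fract t + 1 ≤ (m : ℝ) := by
      rw [← hfl]; exact_mod_cast h'
    have : 1 - Int.fract t ≤ |t - m| := by
      rw [abs_of_nonpos (by linarith)]; linarith
    rw [h1]; exact le_trans (min_le_right _ _) this

private lemma dni_int_add (t : ℝ) (m : ℤ) : distNearestInt (t + m) = distNearestInt t := by
  unfold distNearestInt
  rw [round_add_intCast]
  push_cast
  ring_nf

private lemma dni_lip (s δ : ℝ) : distNearestInt s - |δ| ≤ distNearestInt (s + δ) := by
  have h := dni_le s (round (s + δ))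
  have h2 : |s - (round (s + δ) : ℤ)| ≤ |s + δ - (round (s + δ) : ℤ)| + |δ| := by
    calc |s - (round (s + δ) : ℤ)| = |(s + δ - (round (s + δ) : ℤ)) + (-δ)| := by ring_nf
    _ ≤ |s + δ - (round (s + δ) : ℤ)| + |(-δ)| := abs_add_le _ _
    _ = |s + δ - (round (s + δ) : ℤ)| + |δ| := by rw [abs_neg]
  have h3 : distNearestInt (s + δ) = |s + δ - (round (s + δ) : ℤ)| := rfl
  linarith [le_trans h h2]

private lemma dni_frac_ge {q J : ℕ} (hq : 0 < q) (f : ℝ) (hf0 : 0 ≤ f) (hf1 : f ≤ 1)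
    {v : ℝ} (hv0 : 0 ≤ v) (hvJ : v ≤ J) (hvq : v + 1 + J ≤ q) :
    v / q ≤ distNearestInt (((J : ℝ) + f) / q) := by
  have hq0 : (0 : ℝ) < q := by exact_mod_cast hq
  set M := round (((J : ℝ) + f) / q) with hM
  have hD : distNearestInt (((J : ℝ) + f) / q) = |((J : ℝ) + f) / q - M| := rfl
  rcases le_or_gt M 0 with h | h
  · have hMr : (M : ℝ) ≤ 0 := by exact_mod_cast h
    have hstep : v / q ≤ ((J : ℝ) + f) / q - M := by
      have h1 : v / q ≤ ((J : ℝ) + f) / q := by gcongr <;> linarith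
      linarith
    rw [hD]; exact le_trans hstep (le_abs_self _)
  · have hMr : (1 : ℝ) ≤ M := by exact_mod_cast h
    have hkey : v / q ≤ (M : ℝ) - ((J : ℝ) + f) / q := by
      have h2 : v / q + ((J : ℝ) + f) / q ≤ 1 := by
        rw [← add_div, div_le_one hq0]; linarith
      linarith
    rw [hD]
    exact le_trans hkey (by rw [abs_sub_comm]; exact le_abs_self _)

private lemma harm_aux : ∀ n : ℕ, 3 ≤ n →
    (∑ J ∈ range n, if J ≤ 2 then (0 : ℝ) else 1 / ((J : ℝ) - 1)) ≤ Real.log ((n : ℝ) - 2) := by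
  intro n hn
  induction n, hn using Nat.le_induction with
  | base =>
    have : (∑ J ∈ range 3, if J ≤ 2 then (0 : ℝ) else 1 / ((J : ℝ) - 1)) = 0 := by
      simp [Finset.sum_range_succ]
    rw [this]; norm_num
  | succ n hn ih =>
    rw [Finset.sum_range_succ]
    have hn2 : ¬ (n ≤ 2) := by omega
    simp only [hn2, if_false]
    have hn3 : (3 : ℝ) ≤ (n : ℝ) := by exact_mod_cast hn
    have hpos1 : (0 : ℝ) < (n : ℝ) - 2 := by linarith
    have hpos2 : (0 : ℝ) < (n : ℝ) - 1 := by linarith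
    have hlog : Real.log ((n : ℝ) - 2) - Real.log ((n : ℝ) - 1) ≤ -(1 / ((n : ℝ) - 1)) := by
      have h := Real.log_le_sub_one_of_pos (show (0 : ℝ) < ((n : ℝ) - 2) / ((n : ℝ) - 1) by
        positivity)
      rw [Real.log_div (by linarith) (by linarith)] at h
      have heq : ((n : ℝ) - 2) / ((n : ℝ) - 1) - 1 = -(1 / ((n : ℝ) - 1)) := by
        field_simp
        norm_num
      linarith [heq ▸ h]
    rw [show (((n + 1 : ℕ)) : ℝ) - 2 = (n : ℝ) - 1 by push_cast; ring]
    linarith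

/-- **Lemma 4.** Let `α` be real with `|α − a/q| ≤ 1/q²`, `gcd(a, q) = 1`,
`q ≥ 2`; let `x ≥ 1`, `y > 0` be real and `β` arbitrary. Then
`∑_{h ≤ x} min(y, 1/‖α h + β‖) ≤ 6 (x/q + 1)(y + q ln q)`,
where the summand is interpreted as `y` when `‖α h + β‖ = 0`. -/
theorem sum_min_inv_norm_le (α β : ℝ) (a : ℤ) (q : ℕ) (hq : 2 ≤ q)
    (hgcd : Int.gcd a q = 1) (happ : |α - (a : ℝ) / q| ≤ 1 / (q : ℝ) ^ 2)
    (x : ℝ) (hx : 1 ≤ x) (y : ℝ) (hy : 0 < y) :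
    ∑ h ∈ Finset.Icc 1 ⌊x⌋₊,
        (if distNearestInt (α * h + β) = 0 then y
          else min y (1 / distNearestInt (α * h + β)))
      ≤ 6 * (x / q + 1) * (y + q * Real.log q) := by
  have hq0 : 0 < q := by omega
  have hqR : (0 : ℝ) < q := by exact_mod_cast hq0
  set F : ℕ → ℝ := fun h =>
    if distNearestInt (α * h + β) = 0 then y
    else min y (1 / distNearestInt (α * h + β)) with hF
  have hF_nonneg : ∀ h, 0 ≤ F h := by
    intro h
    simp only [hF]
    split
    · exact hy.le
    · exact le_min hy.le (one_div_nonneg.mpr (dni_nonneg _))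
  have hF_le_y : ∀ h, F h ≤ y := by
    intro h
    simp only [hF]
    split
    · exact le_refl _
    · exact min_le_left _ _
  have hF_le_inv : ∀ (h : ℕ) (c : ℝ), 0 < c → c ≤ distNearestInt (α * h + β) →
      F h ≤ 1 / c := by
    intro h c hc hcd
    have hd0 : distNearestInt (α * (h : ℝ) + β) ≠ 0 := ne_of_gt (lt_of_lt_of_le hc hcd)
    simp only [hF, hd0, if_false]
    exact le_trans (min_le_right _ _) (one_div_le_one_div_of_le hc hcd)
  -- the function G on residue classes
  set G : ℕ → ℝ := fun J => if min J (q - 1 - J) ≤ 2 then y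
    else (q : ℝ) / ((min J (q - 1 - J) : ℕ) - 1) with hG
  have hG_nonneg : ∀ J, 0 ≤ G J := by
    intro J
    simp only [hG]
    split
    · exact hy.le
    · next h =>
      have h3 : 3 ≤ min J (q - 1 - J) := by omega
      have : (3 : ℝ) ≤ ((min J (q - 1 - J) : ℕ) : ℝ) := by exact_mod_cast h3
      apply div_nonneg hqR.le (by linarith)
  -- per block bound
  have block : ∀ m : ℕ, (∑ r ∈ Ioc 0 q, F (m * q + r)) ≤ 6 * y + 2 * q * Real.log q := by
    intro m
    set ε : ℝ := α - a / q with hε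
    have hεb : |ε| ≤ 1 / (q : ℝ) ^ 2 := happ
    set K : ℤ := ⌊(β + ε * m * q) * q⌋ with hK
    set f : ℝ := (β + ε * m * q) * q - K with hf
    have hf0 : 0 ≤ f := by
      rw [hf]; exact sub_nonneg.mpr (Int.floor_le _)
    have hf1 : f ≤ 1 := by
      rw [hf]
      have := Int.lt_floor_add_one ((β + ε * m * q) * q)
      linarith
    set j : ℕ → ℕ := fun r => ((a * r + K) % q).toNat with hj
    have hjlt : ∀ r, j r < q := by
      intro r
      simp only [hj]
      have h1 : (a * r + K) % q < q := Int.emod_lt_of_pos _ (by exact_mod_cast hq0)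
      have h2 : 0 ≤ (a * r + K) % q := Int.emod_nonneg _ (by exact_mod_cast hq0.ne')
      omega
    -- key distance lower bound
    have hkey : ∀ r ∈ Ioc 0 q,
        ((min (j r) (q - 1 - j r) : ℕ) - 1) / q ≤
          distNearestInt (α * ((m * q + r : ℕ) : ℝ) + β) := by
      intro r hr
      rw [Finset.mem_Ioc] at hr
      set J := j r with hJdef
      have hJq : J < q := hjlt r
      set d : ℤ := (a * r + K) / q with hd
      have hmod : (J : ℤ) = a * r + K - q * d := by
        simp only [hJdef, hj, hd]
        rw [Int.toNat_of_nonneg (Int.emod_nonneg _ (by exact_mod_cast hq0.ne'))]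
        rw [Int.emod_def]
      have hsplit : α * ((m * q + r : ℕ) : ℝ) + β =
          ((J : ℝ) + f) / q + ε * r + ((a * m + d : ℤ) : ℝ) := by
        have hJr : (J : ℝ) = (a : ℝ) * r + K - q * d := by exact_mod_cast hmod
        rw [hJr, hf]
        have hα : α = (a : ℝ) / q + ε := by rw [hε]; ring
        rw [hα]
        push_cast
        field_simp
        ring
      rw [hsplit, dni_int_add]
      have h1 : distNearestInt (((J : ℝ) + f) / q) - |ε * r| ≤
          distNearestInt (((J : ℝ) + f) / q + ε * r) := dni_lip _ _
      have h2 : |ε * r| ≤ 1 / q := by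
        rw [abs_mul]
        have hra : |(r : ℝ)| ≤ q := by
          rw [abs_of_nonneg (by positivity)]; exact_mod_cast hr.2
        calc |ε| * |(r : ℝ)| ≤ (1 / (q : ℝ) ^ 2) * q := by
              apply mul_le_mul hεb hra (abs_nonneg _) (by positivity)
        _ = 1 / q := by field_simp
      have h3 : ((min J (q - 1 - J) : ℕ) : ℝ) / q ≤ distNearestInt (((J : ℝ) + f) / q) := by
        apply dni_frac_ge hq0 f hf0 hf1 (by positivity)
        · exact_mod_cast Nat.cast_le.mpr (min_le_left _ _)
        · have hle : min J (q - 1 - J) + 1 + J ≤ q := by omega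
          push_cast [← Nat.cast_min]
          exact_mod_cast hle
      have : ((min J (q - 1 - J) : ℕ) : ℝ) / q - 1 / q ≤
          distNearestInt (((J : ℝ) + f) / q + ε * r) := by linarith
      calc ((min J (q - 1 - J) : ℕ) - 1 : ℝ) / q
          = ((min J (q - 1 - J) : ℕ) : ℝ) / q - 1 / q := by ring
      _ ≤ _ := this
    -- term-wise bound by G
    have hterm : ∀ r ∈ Ioc 0 q, F (m * q + r) ≤ G (j r) := by
      intro r hr
      by_cases hc : min (j r) (q - 1 - j r) ≤ 2
      · simp only [hG, hc, if_true]
        exact hF_le_y _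
      · simp only [hG, hc, if_false]
        have h3 : 3 ≤ min (j r) (q - 1 - j r) := by omega
        have h3R : (3 : ℝ) ≤ ((min (j r) (q - 1 - j r) : ℕ) : ℝ) := by exact_mod_cast h3
        have hpos : (0 : ℝ) < ((min (j r) (q - 1 - j r) : ℕ) - 1) / q := by
          apply div_pos (by linarith) hqR
        have hFb := hF_le_inv (m * q + r) _ hpos (hkey r hr)
        calc F (m * q + r) ≤ 1 / (((min (j r) (q - 1 - j r) : ℕ) - 1) / q) := hFb
        _ = (q : ℝ) / ((min (j r) (q - 1 - j r) : ℕ) - 1) := by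
            rw [one_div_div]
    -- injectivity of j on the block
    have hinj : Set.InjOn j (Ioc 0 q : Finset ℕ) := by
      intro r hr r' hr' hrr
      simp only [Finset.coe_Ioc, Set.mem_Ioc] at hr hr'
      have heq : (a * r + K) % q = (a * r' + K) % q := by
        simp only [hj] at hrr
        have h1 : 0 ≤ (a * r + K) % q := Int.emod_nonneg _ (by exact_mod_cast hq0.ne')
        have h2 : 0 ≤ (a * r' + K) % q := Int.emod_nonneg _ (by exact_mod_cast hq0.ne')
        omega
      have hdvd2 : (q : ℤ) ∣ a * ((r' : ℤ) - r) := by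
        have h := Int.ModEq.dvd (show Int.ModEq (q : ℤ) (a * r + K) (a * r' + K) from heq)
        have e : (a * (r' : ℤ) + K) - (a * (r : ℤ) + K) = a * ((r' : ℤ) - r) := by ring
        rwa [e] at h
      have hcop : IsCoprime (q : ℤ) a := by
        rw [Int.isCoprime_iff_gcd_eq_one, Int.gcd_comm]
        exact hgcd
      have hdvd3 : (q : ℤ) ∣ ((r' : ℤ) - r) := hcop.dvd_of_dvd_mul_left hdvd2
      have hzero : (r' : ℤ) - r = 0 := by
        apply Int.eq_zero_of_abs_lt_dvd hdvd3
        rw [abs_sub_lt_iff]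
        constructor <;> [skip; skip] <;>
          · have : (r : ℤ) ≤ q := by exact_mod_cast hr.2
            have : (r' : ℤ) ≤ q := by exact_mod_cast hr'.2
            have : (1 : ℤ) ≤ r := by exact_mod_cast hr.1
            have : (1 : ℤ) ≤ r' := by exact_mod_cast hr'.1
            omega
      have : (r' : ℤ) = r := sub_eq_zero.mp hzero
      exact_mod_cast this.symm
    -- sum over block
    have hsum1 : (∑ r ∈ Ioc 0 q, F (m * q + r)) ≤ ∑ r ∈ Ioc 0 q, G (j r) :=
      Finset.sum_le_sum hterm
    have hsum2 : (∑ r ∈ Ioc 0 q, G (j r)) = ∑ J ∈ (Ioc 0 q).image j, G J :=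
      (Finset.sum_image (fun x hx y hy h => hinj (by exact_mod_cast hx) (by exact_mod_cast hy) h)).symm
    have hsum3 : (∑ J ∈ (Ioc 0 q).image j, G J) ≤ ∑ J ∈ range q, G J := by
      apply Finset.sum_le_sum_of_subset_of_nonneg
      · intro J hJ
        rw [Finset.mem_image] at hJ
        obtain ⟨r, _, hr⟩ := hJ
        rw [Finset.mem_range, ← hr]
        exact hjlt r
      · intro J _ _
        exact hG_nonneg J
    -- now bound the sum of G over range q
    set H : ℕ → ℝ := fun J => if J ≤ 2 then y else (q : ℝ) / ((J : ℝ) - 1) with hH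
    have hH_nonneg : ∀ J, 0 ≤ H J := by
      intro J
      simp only [hH]
      split
      · exact hy.le
      · next h =>
        have : (3 : ℝ) ≤ (J : ℝ) := by exact_mod_cast (by omega : 3 ≤ J)
        apply div_nonneg hqR.le (by linarith)
    have hGH : ∀ J ∈ range q, G J ≤ H J + H (q - 1 - J) := by
      intro J hJ
      rw [Finset.mem_range] at hJ
      simp only [hG]
      by_cases hc : min J (q - 1 - J) ≤ 2
      · simp only [hc, if_true]
        rcases min_le_iff.mp hc with h | h
        · have hHJ : H J = y := by simp [hH, h]
          rw [hHJ]
          linarith [hH_nonneg (q - 1 - J)]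
        · have hHJ : H (q - 1 - J) = y := by simp [hH, h]
          rw [hHJ]
          linarith [hH_nonneg J]
      · simp only [hc, if_false]
        have h3 : 3 ≤ min J (q - 1 - J) := by omega
        have hJ3 : 3 ≤ J := le_trans h3 (min_le_left _ _)
        have hJ3' : 3 ≤ q - 1 - J := le_trans h3 (min_le_right _ _)
        have hJ2 : ¬ (J ≤ 2) := by omega
        have hJ2' : ¬ (q - 1 - J ≤ 2) := by omega
        simp only [hH, hJ2, hJ2', if_false]
        have hposJ : (0:ℝ) ≤ (q : ℝ) / ((J : ℝ) - 1) := by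
          have : (3:ℝ) ≤ (J:ℝ) := by exact_mod_cast hJ3
          apply div_nonneg hqR.le (by linarith)
        have hposJ' : (0:ℝ) ≤ (q : ℝ) / (((q - 1 - J : ℕ) : ℝ) - 1) := by
          have : (3:ℝ) ≤ ((q - 1 - J : ℕ):ℝ) := by exact_mod_cast hJ3'
          apply div_nonneg hqR.le (by linarith)
        rcases le_total J (q - 1 - J) with h | h
        · rw [min_eq_left h]
          linarith
        · rw [min_eq_right h]
          linarith
    have hsum4 : (∑ J ∈ range q, G J) ≤ 2 * ∑ J ∈ range q, H J := by
      calc (∑ J ∈ range q, G J) ≤ ∑ J ∈ range q, (H J + H (q - 1 - J)) :=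
            Finset.sum_le_sum hGH
      _ = (∑ J ∈ range q, H J) + ∑ J ∈ range q, H (q - 1 - J) := Finset.sum_add_distrib
      _ = (∑ J ∈ range q, H J) + ∑ J ∈ range q, H J := by
            rw [Finset.sum_range_reflect]
      _ = 2 * ∑ J ∈ range q, H J := by ring
    have hsum5 : (∑ J ∈ range q, H J) ≤ 3 * y + (q : ℝ) * Real.log q := by
      have hsplit : ∀ J, H J = (if J ≤ 2 then y else 0) +
          (if J ≤ 2 then 0 else (q : ℝ) / ((J : ℝ) - 1)) := by
        intro J
        simp only [hH]
        split <;> ring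
      have h1 : (∑ J ∈ range q, (if J ≤ 2 then y else 0)) ≤ 3 * y := by
        rw [← Finset.sum_filter, Finset.sum_const, nsmul_eq_mul]
        have hcard : ((range q).filter (fun J => J ≤ 2)).card ≤ 3 := by
          have hsub : (range q).filter (fun J => J ≤ 2) ⊆ range 3 := by
            intro J hJ
            simp only [Finset.mem_filter, Finset.mem_range] at hJ ⊢
            omega
          have h := Finset.card_le_card hsub
          simpa using h
        have hcard' : (((range q).filter (fun J => J ≤ 2)).card : ℝ) ≤ 3 := by
          exact_mod_cast hcard
        exact mul_le_mul_of_nonneg_right hcard' hy.le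
      have h2 : (∑ J ∈ range q, (if J ≤ 2 then (0:ℝ) else (q : ℝ) / ((J : ℝ) - 1)))
          ≤ (q : ℝ) * Real.log q := by
        have heq : (∑ J ∈ range q, (if J ≤ 2 then (0:ℝ) else (q : ℝ) / ((J : ℝ) - 1)))
            = (q : ℝ) * ∑ J ∈ range q, (if J ≤ 2 then (0:ℝ) else 1 / ((J : ℝ) - 1)) := by
          rw [Finset.mul_sum]
          apply Finset.sum_congr rfl
          intro J _
          split <;> ring
        rw [heq]
        apply mul_le_mul_of_nonneg_left _ hqR.le
        by_cases hq3 : 3 ≤ q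
        · have h3R : (3:ℝ) ≤ (q:ℝ) := by exact_mod_cast hq3
          exact le_trans (harm_aux q hq3)
            (Real.log_le_log (by linarith) (by linarith))
        · have hq2 : q = 2 := by omega
          subst hq2
          norm_num [Finset.sum_range_succ]
          exact Real.log_nonneg (by norm_num)
      have hsum5a : (∑ J ∈ range q, H J)
          = (∑ J ∈ range q, (if J ≤ 2 then y else 0)) +
            ∑ J ∈ range q, (if J ≤ 2 then (0:ℝ) else (q : ℝ) / ((J : ℝ) - 1)) := by
        rw [← Finset.sum_add_distrib]
        exact Finset.sum_congr rfl fun J _ => hsplit J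
      rw [hsum5a]
      exact add_le_add h1 h2
    have hfin : (∑ r ∈ Ioc 0 q, F (m * q + r)) ≤ ∑ J ∈ range q, G J := by
      rw [hsum2] at hsum1
      exact le_trans hsum1 hsum3
    linarith
  -- assemble the blocks
  set n := ⌊x⌋₊ with hn
  set M := n / q + 1 with hM
  have hnx : (n : ℝ) ≤ x := Nat.floor_le (by linarith)
  have hsub : Finset.Icc 1 n ⊆ Finset.Ioc 0 (M * q) := by
    intro h hh
    rw [Finset.mem_Icc] at hh
    rw [Finset.mem_Ioc]
    have hdm := Nat.div_add_mod n q
    have hlt := Nat.mod_lt n hq0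
    constructor
    · omega
    · have hMq : M * q = q * (n / q) + q := by rw [hM]; ring
      omega
  have hdecomp : ∀ N : ℕ, (∑ h ∈ Finset.Ioc 0 (N * q), F h)
      = ∑ m ∈ range N, ∑ r ∈ Finset.Ioc 0 q, F (m * q + r) := by
    intro N
    induction N with
    | zero => simp
    | succ N ih =>
      have h1 : (N + 1) * q = N * q + q := by ring
      rw [h1, ← Finset.sum_Ioc_consecutive F (Nat.zero_le (N * q)) (Nat.le_add_right (N * q) q),
        ih, Finset.sum_range_succ]
      congr 1
      have hmap : Finset.Ioc (N * q) (N * q + q)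
          = (Finset.Ioc 0 q).map (addLeftEmbedding (N * q)) := by
        rw [Finset.map_add_left_Ioc]
        norm_num
      rw [hmap, Finset.sum_map]
      apply Finset.sum_congr rfl
      intro r _
      congr 1
  have hstep : (∑ h ∈ Finset.Icc 1 n, F h) ≤ (M : ℝ) * (6 * y + 2 * q * Real.log q) := by
    calc (∑ h ∈ Finset.Icc 1 n, F h) ≤ ∑ h ∈ Finset.Ioc 0 (M * q), F h :=
          Finset.sum_le_sum_of_subset_of_nonneg hsub (fun h _ _ => hF_nonneg h)
    _ = ∑ m ∈ range M, ∑ r ∈ Finset.Ioc 0 q, F (m * q + r) := hdecomp M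
    _ ≤ ∑ m ∈ range M, (6 * y + 2 * q * Real.log q) :=
          Finset.sum_le_sum (fun m _ => block m)
    _ = (M : ℝ) * (6 * y + 2 * q * Real.log q) := by
          rw [Finset.sum_const, Finset.card_range, nsmul_eq_mul]
  have hlog0 : 0 ≤ Real.log q := Real.log_nonneg (by exact_mod_cast hq0)
  have hql : 0 ≤ (q : ℝ) * Real.log q := mul_nonneg hqR.le hlog0
  have hMx : (M : ℝ) ≤ x / q + 1 := by
    rw [hM]
    push_cast
    have h1 : ((n / q : ℕ) : ℝ) ≤ (n : ℝ) / q := Nat.cast_div_le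
    have h2 : (n : ℝ) / q ≤ x / q := by gcongr
    linarith
  have hfin : (M : ℝ) * (6 * y + 2 * q * Real.log q)
      ≤ 6 * (x / q + 1) * (y + q * Real.log q) := by
    have hb : 6 * y + 2 * (q : ℝ) * Real.log q ≤ 6 * (y + q * Real.log q) := by linarith
    have hbn : 0 ≤ 6 * y + 2 * (q : ℝ) * Real.log q := by linarith
    calc (M : ℝ) * (6 * y + 2 * q * Real.log q)
        ≤ (x / q + 1) * (6 * (y + q * Real.log q)) :=
          mul_le_mul hMx hb hbn (by positivity)
    _ = 6 * (x / q + 1) * (y + q * Real.log q) := by ring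
  exact le_trans hstep hfin
end
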